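/- arXiv:2510.11737 — 5 statements merged into one kernel-verified Lean document; each statement's English description precedes it below -/
import Mathlib

section
/- Let μ > 1 be a real number and let (A_n) be a sequence of nonnegative reals with A_n·(μ−1)/μ^{n+1} → 1 as n → ∞ (the cumulative wrapper count asymptotics). Let O be a countable type of outputs and let m : O → ℕ → ℕ assign to each output o and each core length L the multiplicity m_o(L), such that the total partition sum Z = Σ_{o} Σ_{L≥0} m_o(L)·μ^{−L} is finite and strictly positive. For each cutoff D define N_o(D) = Σ_{L=0}^{D} m_o(L)·A_{D−L} and P_D(o) = N_o(D) / Σ_{o'} N_{o'}(D). Then for every output o, P_D(o) converges as D → ∞ to (Σ_{L≥0} m_o(L)·e^{−γL}) / (Σ_{o'} Σ_{L≥0} m_{o'}(L)·e^{−γL}), where γ = ln μ; i.e., the induced distribution over outputs converges to the Boltzmann-weighted distribution with inverse temperature γ. -/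
open Filter Topology

private lemma aux_tendsto (μ : ℝ) (hμ : 1 < μ)
    (A : ℕ → ℝ) (hA0 : ∀ n, 0 ≤ A n)
    (hA : Tendsto (fun n => A n * (μ - 1) / μ ^ (n + 1)) atTop (𝓝 1))
    (M : ℝ) (hM : ∀ n, A n * (μ - 1) / μ ^ (n + 1) ≤ M)
    (g : ℕ → ℝ) (hg : ∀ L, 0 ≤ g L)
    (hgs : Summable fun L => g L * μ⁻¹ ^ L) :
    Tendsto (fun D : ℕ =>
        (∑ L ∈ Finset.range (D + 1), g L * A (D - L)) * ((μ - 1) / μ ^ (D + 1)))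
      atTop (𝓝 (∑' L : ℕ, g L * μ⁻¹ ^ L)) := by
  have hμ0 : (0:ℝ) < μ := lt_trans one_pos hμ
  set B : ℕ → ℝ := fun n => A n * (μ - 1) / μ ^ (n + 1) with hB
  have hB0 : ∀ n, 0 ≤ B n := fun n =>
    div_nonneg (mul_nonneg (hA0 n) (by linarith)) (pow_nonneg hμ0.le _)
  -- rewrite the scaled partial sums as tsums of a dominated family
  set F : ℕ → ℕ → ℝ := fun D L => if L ≤ D then g L * μ⁻¹ ^ L * B (D - L) else 0 with hF
  have key : ∀ D, (∑ L ∈ Finset.range (D + 1), g L * A (D - L)) * ((μ - 1) / μ ^ (D + 1))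
      = ∑' L : ℕ, F D L := by
    intro D
    rw [tsum_eq_sum (s := Finset.range (D + 1))
      (by intro b hb; simp only [Finset.mem_range, not_lt] at hb
          exact if_neg (by omega))]
    rw [Finset.sum_mul]
    refine Finset.sum_congr rfl fun L hL => ?_
    have hLD : L ≤ D := Nat.lt_succ_iff.mp (Finset.mem_range.mp hL)
    simp only [hF, if_pos hLD, hB]
    have hpow : μ ^ (D + 1) = μ ^ (D - L + 1) * μ ^ L := by
      rw [← pow_add]; congr 1; omega
    have h1 : μ ^ (D - L + 1) ≠ 0 := by positivity
    have h2 : μ ^ L ≠ 0 := by positivity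
    rw [hpow, inv_pow]
    field_simp
  have hMB : ∀ n, B n ≤ M := hM
  have hM0 : 0 ≤ M := le_trans (hB0 0) (hM 0)
  have hlim := tendsto_tsum_of_dominated_convergence
    (f := F) (g := fun L => g L * μ⁻¹ ^ L) (bound := fun L => g L * μ⁻¹ ^ L * M)
    (hgs.mul_right M)
    (by
      intro L
      have h1 : Tendsto (fun D : ℕ => B (D - L)) atTop (𝓝 1) :=
        hA.comp (tendsto_sub_atTop_nat L)
      have h2 : Tendsto (fun D : ℕ => g L * μ⁻¹ ^ L * B (D - L)) atTop
          (𝓝 (g L * μ⁻¹ ^ L)) := by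
        simpa using h1.const_mul (g L * μ⁻¹ ^ L)
      refine h2.congr' ?_
      filter_upwards [eventually_ge_atTop L] with D hD
      simp [hF, hD])
    (by
      filter_upwards with D
      intro L
      have hnn : 0 ≤ g L * μ⁻¹ ^ L := mul_nonneg (hg L) (by positivity)
      by_cases h : L ≤ D
      · simp only [hF, if_pos h, Real.norm_eq_abs,
          abs_of_nonneg (mul_nonneg hnn (hB0 _))]
        exact mul_le_mul_of_nonneg_left (hMB _) hnn
      · simp only [hF, if_neg h, norm_zero]
        exact mul_nonneg hnn hM0)
  exact hlim.congr fun D => (key D).symm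

/-- Emergent Algorithmic Temperature (μ > 1, convergent partition sum):
under the cumulative wrapper asymptotics `A_n (μ-1)/μ^{n+1} → 1`, the cutoff
distribution `P_D(o)` converges to the Boltzmann-weighted distribution with
inverse temperature `γ = log μ`. -/
theorem emergent_algorithmic_temperature
    {O : Type*} [Countable O] (μ : ℝ) (hμ : 1 < μ)
    (A : ℕ → ℝ) (hA0 : ∀ n, 0 ≤ A n)
    (hA : Tendsto (fun n => A n * (μ - 1) / μ ^ (n + 1)) atTop (𝓝 1))
    (m : O → ℕ → ℕ)
    (hZsum : Summable (fun p : O × ℕ => (m p.1 p.2 : ℝ) * μ⁻¹ ^ p.2))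
    (hZpos : 0 < ∑' (o : O), ∑' (L : ℕ), (m o L : ℝ) * μ⁻¹ ^ L)
    (o : O) :
    Tendsto
      (fun D : ℕ =>
        (∑ L ∈ Finset.range (D + 1), (m o L : ℝ) * A (D - L)) /
          ∑' (o' : O), ∑ L ∈ Finset.range (D + 1), (m o' L : ℝ) * A (D - L))
      atTop
      (𝓝 ((∑' (L : ℕ), (m o L : ℝ) * Real.exp (-(Real.log μ) * L)) /
        ∑' (o' : O), ∑' (L : ℕ), (m o' L : ℝ) * Real.exp (-(Real.log μ) * L))) := by
  have hμ0 : (0:ℝ) < μ := lt_trans one_pos hμ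
  -- exp(-(log μ) L) = μ⁻¹ ^ L
  have hexp : ∀ L : ℕ, Real.exp (-(Real.log μ) * L) = μ⁻¹ ^ L := by
    intro L
    rw [neg_mul, Real.exp_neg, mul_comm, Real.exp_nat_mul, Real.exp_log hμ0, ← inv_pow]
  simp only [hexp]
  -- bound for B
  have hBabs : Tendsto (fun n => |A n * (μ - 1) / μ ^ (n + 1)|) atTop (𝓝 |1|) :=
    hA.abs
  obtain ⟨M, hMmem⟩ := hBabs.bddAbove_range
  have hM : ∀ n, A n * (μ - 1) / μ ^ (n + 1) ≤ M := fun n =>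
    le_trans (le_abs_self _) (hMmem ⟨n, rfl⟩)
  -- summability of slices
  have hslice : ∀ o' : O, Summable fun L => ((m o' L : ℝ)) * μ⁻¹ ^ L := fun o' =>
    hZsum.prod_factor o'
  have houter : Summable fun o' : O => ∑' L : ℕ, ((m o' L : ℝ)) * μ⁻¹ ^ L := hZsum.prod
  -- numerator and per-output convergence
  have hnum : ∀ o' : O, Tendsto (fun D : ℕ =>
      (∑ L ∈ Finset.range (D + 1), (m o' L : ℝ) * A (D - L)) * ((μ - 1) / μ ^ (D + 1)))
      atTop (𝓝 (∑' L : ℕ, (m o' L : ℝ) * μ⁻¹ ^ L)) := fun o' =>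
    aux_tendsto μ hμ A hA0 hA M hM _ (fun L => Nat.cast_nonneg _) (hslice o')
  -- denominator convergence
  have hden : Tendsto (fun D : ℕ =>
      (∑' o' : O, ∑ L ∈ Finset.range (D + 1), (m o' L : ℝ) * A (D - L)) * ((μ - 1) / μ ^ (D + 1)))
      atTop (𝓝 (∑' o' : O, ∑' L : ℕ, (m o' L : ℝ) * μ⁻¹ ^ L)) := by
    have hrw : ∀ D : ℕ,
        (∑' o' : O, ∑ L ∈ Finset.range (D + 1), (m o' L : ℝ) * A (D - L)) * ((μ - 1) / μ ^ (D + 1))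
        = ∑' o' : O, ((∑ L ∈ Finset.range (D + 1), (m o' L : ℝ) * A (D - L)) * ((μ - 1) / μ ^ (D + 1))) := by
      intro D; rw [tsum_mul_right]
    refine (tendsto_tsum_of_dominated_convergence
      (f := fun D o' => (∑ L ∈ Finset.range (D + 1), (m o' L : ℝ) * A (D - L)) * ((μ - 1) / μ ^ (D + 1)))
      (g := fun o' => ∑' L : ℕ, (m o' L : ℝ) * μ⁻¹ ^ L)
      (bound := fun o' => M * ∑' L : ℕ, (m o' L : ℝ) * μ⁻¹ ^ L)
      (houter.mul_left M) hnum ?_).congr fun D => (hrw D).symm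
    filter_upwards with D
    intro o'
    -- same rewriting as in aux: bound each term
    have hB0 : ∀ n, 0 ≤ A n * (μ - 1) / μ ^ (n + 1) := fun n =>
      div_nonneg (mul_nonneg (hA0 n) (by linarith)) (pow_nonneg hμ0.le _)
    have key : (∑ L ∈ Finset.range (D + 1), (m o' L : ℝ) * A (D - L)) * ((μ - 1) / μ ^ (D + 1))
        = ∑ L ∈ Finset.range (D + 1), (m o' L : ℝ) * μ⁻¹ ^ L * (A (D - L) * (μ - 1) / μ ^ (D - L + 1)) := by
      rw [Finset.sum_mul]
      refine Finset.sum_congr rfl fun L hL => ?_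
      have hLD : L ≤ D := Nat.lt_succ_iff.mp (Finset.mem_range.mp hL)
      have hpow : μ ^ (D + 1) = μ ^ (D - L + 1) * μ ^ L := by
        rw [← pow_add]; congr 1; omega
      have h1 : μ ^ (D - L + 1) ≠ 0 := by positivity
      have h2 : μ ^ L ≠ 0 := by positivity
      rw [hpow, inv_pow]; field_simp
    rw [key]
    have hnn : ∀ L ∈ Finset.range (D + 1),
        0 ≤ (m o' L : ℝ) * μ⁻¹ ^ L * (A (D - L) * (μ - 1) / μ ^ (D - L + 1)) := fun L _ =>
      mul_nonneg (by positivity) (hB0 _)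
    rw [Real.norm_eq_abs, abs_of_nonneg (Finset.sum_nonneg hnn)]
    calc ∑ L ∈ Finset.range (D + 1), (m o' L : ℝ) * μ⁻¹ ^ L * (A (D - L) * (μ - 1) / μ ^ (D - L + 1))
        ≤ ∑ L ∈ Finset.range (D + 1), (m o' L : ℝ) * μ⁻¹ ^ L * M := by
          refine Finset.sum_le_sum fun L _ => mul_le_mul_of_nonneg_left (hM _) (by positivity)
      _ = M * ∑ L ∈ Finset.range (D + 1), (m o' L : ℝ) * μ⁻¹ ^ L := by
          rw [← Finset.sum_mul, mul_comm]
      _ ≤ M * ∑' L : ℕ, (m o' L : ℝ) * μ⁻¹ ^ L := by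
          have hM0 : 0 ≤ M := le_trans (hB0 0) (hM 0)
          refine mul_le_mul_of_nonneg_left ?_ hM0
          exact Summable.sum_le_tsum _ (fun L _ => by positivity) (hslice o')
  -- combine via quotient
  have hZne : (∑' o' : O, ∑' L : ℕ, (m o' L : ℝ) * μ⁻¹ ^ L) ≠ 0 := ne_of_gt hZpos
  have hquot := (hnum o).div hden hZne
  refine hquot.congr fun D => ?_
  simp only [Pi.div_apply]
  have hc : (μ - 1) / μ ^ (D + 1) ≠ 0 := by
    apply div_ne_zero (by linarith) (by positivity)
  rw [mul_div_mul_right _ _ hc]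
end

section
/- Let (A_n) be a sequence of nonnegative reals with A_n/(n+1) → 1 as n → ∞. Let O be a countable type of outputs and let m : O → ℕ → ℕ be multiplicities such that Σ_{o} Σ_{L≥0} m_o(L) is finite and strictly positive. For each cutoff D define N_o(D) = Σ_{L=0}^{D} m_o(L)·A_{D−L} and P_D(o) = N_o(D) / Σ_{o'} N_{o'}(D). Then for every output o, P_D(o) converges as D → ∞ to (Σ_{L≥0} m_o(L)) / (Σ_{o'} Σ_{L≥0} m_{o'}(L)), i.e., the Boltzmann distribution at inverse temperature γ = 0. -/
open Filter Topology

private lemma eat_ratio {A : ℕ → ℝ}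
    (hA : Tendsto (fun n => A n / (n + 1 : ℝ)) atTop (𝓝 1)) (L : ℕ) :
    Tendsto (fun D : ℕ => A (D - L) / ((D : ℝ) + 1)) atTop (𝓝 1) := by
  have h1 : Tendsto (fun D : ℕ => A (D - L) / (((D - L : ℕ) : ℝ) + 1)) atTop (𝓝 1) :=
    hA.comp (tendsto_sub_atTop_nat L)
  have hsmall : Tendsto (fun D : ℕ => (L : ℝ) / ((D : ℝ) + 1)) atTop (𝓝 0) := by
    have := (tendsto_const_div_atTop_nhds_zero_nat (L : ℝ)).comp (tendsto_add_atTop_nat 1)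
    refine this.congr fun D => ?_
    simp [Function.comp]
  have h2 : Tendsto (fun D : ℕ => (((D - L : ℕ) : ℝ) + 1) / ((D : ℝ) + 1)) atTop (𝓝 1) := by
    have h3 : Tendsto (fun D : ℕ => 1 - (L : ℝ) / ((D : ℝ) + 1)) atTop (𝓝 1) := by
      simpa using tendsto_const_nhds.sub hsmall
    refine h3.congr' ?_
    filter_upwards [eventually_ge_atTop L] with D hD
    have hc : ((D - L : ℕ) : ℝ) = (D : ℝ) - L := by
      rw [Nat.cast_sub hD]
    have hD1 : ((D : ℝ) + 1) ≠ 0 := by positivity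
    rw [hc]
    field_simp
    ring
  have h := h1.mul h2
  rw [mul_one] at h
  refine h.congr fun D => ?_
  have hb : (((D - L : ℕ) : ℝ) + 1) ≠ 0 := by positivity
  field_simp

private lemma eat_core {A : ℕ → ℝ} (hA0 : ∀ n, 0 ≤ A n)
    (hA : Tendsto (fun n => A n / (n + 1 : ℝ)) atTop (𝓝 1))
    {g : ℕ → ℝ} (hg0 : ∀ L, 0 ≤ g L) (hg : Summable g)
    {C : ℝ} (hC : ∀ n, A n / ((n : ℝ) + 1) ≤ C) :
    Tendsto (fun D : ℕ => (∑ L ∈ Finset.range (D + 1), g L * A (D - L)) / ((D : ℝ) + 1))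
      atTop (𝓝 (∑' L, g L)) := by
  have key : ∀ D : ℕ, (∑ L ∈ Finset.range (D + 1), g L * A (D - L)) / ((D : ℝ) + 1)
      = ∑' L : ℕ, (if L ≤ D then g L * (A (D - L) / ((D : ℝ) + 1)) else 0) := by
    intro D
    rw [tsum_eq_sum (s := Finset.range (D + 1)) (fun L hL => by
      rw [if_neg]
      exact fun h => hL (Finset.mem_range.mpr (Nat.lt_succ_of_le h)))]
    rw [Finset.sum_div]
    refine Finset.sum_congr rfl fun L hL => ?_
    rw [if_pos (Nat.lt_succ_iff.mp (Finset.mem_range.mp hL)), mul_div_assoc]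
  have hCb : ∀ D L : ℕ, L ≤ D → A (D - L) / ((D : ℝ) + 1) ≤ C := by
    intro D L hL
    refine le_trans ?_ (hC (D - L))
    apply div_le_div_of_nonneg_left (hA0 _) (by positivity)
    have : ((D - L : ℕ) : ℝ) ≤ (D : ℝ) := Nat.cast_le.mpr (Nat.sub_le D L)
    linarith
  simp only [key]
  apply tendsto_tsum_of_dominated_convergence (bound := fun L => C * g L)
  · exact hg.mul_left C
  · intro L
    have h := ((eat_ratio hA L).const_mul (g L))
    rw [mul_one] at h
    refine h.congr' ?_
    filter_upwards [eventually_ge_atTop L] with D hD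
    rw [if_pos hD]
  · filter_upwards with D L
    by_cases h : L ≤ D
    · rw [if_pos h]
      have hr0 : 0 ≤ A (D - L) / ((D : ℝ) + 1) := div_nonneg (hA0 _) (by positivity)
      rw [Real.norm_eq_abs, abs_of_nonneg (mul_nonneg (hg0 L) hr0)]
      calc g L * (A (D - L) / ((D : ℝ) + 1)) ≤ g L * C :=
            mul_le_mul_of_nonneg_left (hCb D L h) (hg0 L)
        _ = C * g L := mul_comm _ _
    · rw [if_neg h, norm_zero]
      have : 0 ≤ C := le_trans (div_nonneg (hA0 0) (by norm_num)) (hC 0)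
      exact mul_nonneg this (hg0 L)

/-- Emergent Algorithmic Temperature, μ = 1 case (zero inverse temperature):
if `A_n/(n+1) → 1` and the total multiplicity is finite and positive, then
the cutoff distribution `P_D(o)` converges to the Boltzmann distribution at
inverse temperature `γ = 0`, i.e. to `(Σ_L m_o(L)) / (Σ_{o'} Σ_L m_{o'}(L))`. -/
theorem emergent_algorithmic_temperature_mu_one
    {O : Type*} [Countable O]
    (A : ℕ → ℝ) (hA0 : ∀ n, 0 ≤ A n)
    (hA : Tendsto (fun n => A n / (n + 1 : ℝ)) atTop (𝓝 1))
    (m : O → ℕ → ℕ)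
    (hZsum : Summable (fun p : O × ℕ => (m p.1 p.2 : ℝ)))
    (hZpos : 0 < ∑' (o : O), ∑' (L : ℕ), (m o L : ℝ))
    (o : O) :
    Tendsto
      (fun D : ℕ =>
        (∑ L ∈ Finset.range (D + 1), (m o L : ℝ) * A (D - L)) /
          ∑' (o' : O), ∑ L ∈ Finset.range (D + 1), (m o' L : ℝ) * A (D - L))
      atTop
      (𝓝 ((∑' (L : ℕ), (m o L : ℝ)) /
        ∑' (o' : O), ∑' (L : ℕ), (m o' L : ℝ))) := by
  -- a uniform bound on A n / (n+1)
  obtain ⟨C, hC⟩ := (hA.bddAbove_range : BddAbove (Set.range fun n => A n / ((n : ℝ) + 1)))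
  have hC' : ∀ n, A n / ((n : ℝ) + 1) ≤ C := fun n => hC (Set.mem_range_self n)
  have hC0 : 0 ≤ C := le_trans (div_nonneg (hA0 0) (by norm_num)) (hC' 0)
  -- summability facts
  have hfib : ∀ o' : O, Summable fun L => (m o' L : ℝ) := fun o' => hZsum.prod_factor o'
  have hSsum : Summable fun o' : O => ∑' L, (m o' L : ℝ) :=
    ((summable_prod_of_nonneg fun p => Nat.cast_nonneg _).mp hZsum).2
  -- numerator convergence
  have hnum : Tendsto
      (fun D : ℕ => (∑ L ∈ Finset.range (D + 1), (m o L : ℝ) * A (D - L)) / ((D : ℝ) + 1))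
      atTop (𝓝 (∑' L, (m o L : ℝ))) :=
    eat_core hA0 hA (fun L => Nat.cast_nonneg _) (hfib o) hC'
  -- denominator convergence (after dividing by D+1)
  have hden : Tendsto
      (fun D : ℕ => ∑' o' : O,
        (∑ L ∈ Finset.range (D + 1), (m o' L : ℝ) * A (D - L)) / ((D : ℝ) + 1))
      atTop (𝓝 (∑' o' : O, ∑' L, (m o' L : ℝ))) := by
    apply tendsto_tsum_of_dominated_convergence (bound := fun o' => C * ∑' L, (m o' L : ℝ))
    · exact hSsum.mul_left C
    · exact fun o' => eat_core hA0 hA (fun L => Nat.cast_nonneg _) (hfib o') hC'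
    · filter_upwards with D o'
      have hterm : ∀ L ∈ Finset.range (D + 1),
          (m o' L : ℝ) * A (D - L) / ((D : ℝ) + 1) ≤ C * (m o' L : ℝ) := by
        intro L hL
        have hLD : L ≤ D := Nat.lt_succ_iff.mp (Finset.mem_range.mp hL)
        have hr : A (D - L) / ((D : ℝ) + 1) ≤ C := by
          refine le_trans ?_ (hC' (D - L))
          apply div_le_div_of_nonneg_left (hA0 _) (by positivity)
          have : ((D - L : ℕ) : ℝ) ≤ (D : ℝ) := Nat.cast_le.mpr (Nat.sub_le D L)
          linarith
        rw [mul_div_assoc]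
        calc (m o' L : ℝ) * (A (D - L) / ((D : ℝ) + 1)) ≤ (m o' L : ℝ) * C :=
              mul_le_mul_of_nonneg_left hr (Nat.cast_nonneg _)
          _ = C * (m o' L : ℝ) := mul_comm _ _
      have h0 : 0 ≤ (∑ L ∈ Finset.range (D + 1), (m o' L : ℝ) * A (D - L)) / ((D : ℝ) + 1) := by
        apply div_nonneg _ (by positivity)
        exact Finset.sum_nonneg fun L _ => mul_nonneg (Nat.cast_nonneg _) (hA0 _)
      rw [Real.norm_eq_abs, abs_of_nonneg h0, Finset.sum_div]
      calc (∑ L ∈ Finset.range (D + 1), (m o' L : ℝ) * A (D - L) / ((D : ℝ) + 1))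
          ≤ ∑ L ∈ Finset.range (D + 1), C * (m o' L : ℝ) := Finset.sum_le_sum hterm
        _ = C * ∑ L ∈ Finset.range (D + 1), (m o' L : ℝ) := by rw [Finset.mul_sum]
        _ ≤ C * ∑' L, (m o' L : ℝ) := by
            apply mul_le_mul_of_nonneg_left _ hC0
            exact Summable.sum_le_tsum _ (fun L _ => Nat.cast_nonneg _) (hfib o')
  -- combine
  have hratio := hnum.div hden (ne_of_gt hZpos)
  refine hratio.congr fun D => ?_
  have hD1 : ((D : ℝ) + 1) ≠ 0 := by positivity
  simp only [Pi.div_apply]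
  rw [tsum_div_const, div_div_div_cancel_right₀ hD1]
end

section
/- Let μ > 1 and let (A_n) be nonnegative reals with A_n·(μ−1)/μ^{n+1} → 1 as n → ∞. Let f : ℕ → ℝ be nonnegative with S = Σ_{L≥0} f(L)·μ^{−L} finite and strictly positive. Then Σ_{L=0}^{D} f(L)·A_{D−L} is asymptotically equivalent to (μ^{D+1}/(μ−1))·S as D → ∞; that is, (μ−1)·μ^{−(D+1)}·Σ_{L=0}^{D} f(L)·A_{D−L} → S. -/
open Filter Topology

/-- Convolution asymptotics: if `A_n (μ-1)/μ^{n+1} → 1` and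
`S = Σ_L f(L) μ^{-L}` is finite and positive, then
`(μ-1) μ^{-(D+1)} Σ_{L=0}^{D} f(L) A_{D-L} → S`. -/
theorem convolution_asymptotics (μ : ℝ) (hμ : 1 < μ)
    (A : ℕ → ℝ) (hA0 : ∀ n, 0 ≤ A n)
    (hA : Tendsto (fun n => A n * (μ - 1) / μ ^ (n + 1)) atTop (𝓝 1))
    (f : ℕ → ℝ) (hf0 : ∀ L, 0 ≤ f L)
    (hS : Summable (fun L => f L * μ⁻¹ ^ L))
    (hSpos : 0 < ∑' (L : ℕ), f L * μ⁻¹ ^ L) :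
    Tendsto
      (fun D : ℕ =>
        (μ - 1) / μ ^ (D + 1) * ∑ L ∈ Finset.range (D + 1), f L * A (D - L))
      atTop (𝓝 (∑' (L : ℕ), f L * μ⁻¹ ^ L)) := by
  have hμ0 : 0 < μ := lt_trans one_pos hμ
  set g : ℕ → ℝ := fun n => A n * (μ - 1) / μ ^ (n + 1) with hg
  -- bound on g
  obtain ⟨M, hM⟩ : ∃ M : ℝ, ∀ n, |g n| ≤ M := by
    obtain ⟨M, hM⟩ := (hA.norm.bddAbove_range)
    exact ⟨M, fun n => hM ⟨n, rfl⟩⟩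
  -- define F D L
  set F : ℕ → ℕ → ℝ := fun D L => if L ≤ D then f L * μ⁻¹ ^ L * g (D - L) else 0
    with hF
  have key : ∀ D : ℕ,
      (μ - 1) / μ ^ (D + 1) * ∑ L ∈ Finset.range (D + 1), f L * A (D - L)
      = ∑' L, F D L := by
    intro D
    rw [tsum_eq_sum (s := Finset.range (D + 1)) (by
      intro L hL
      simp only [hF]
      rw [if_neg]
      simpa using fun h => hL (Finset.mem_range.2 (Nat.lt_succ_of_le h)))]
    rw [Finset.mul_sum]
    refine Finset.sum_congr rfl fun L hL => ?_
    have hLD : L ≤ D := Nat.lt_succ_iff.1 (Finset.mem_range.1 hL)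
    simp only [hF, if_pos hLD, hg]
    have hpow : μ ^ (D + 1) = μ ^ L * μ ^ (D - L + 1) := by
      rw [← pow_add]; congr 1; omega
    rw [hpow, inv_pow, div_eq_mul_inv, div_eq_mul_inv, mul_inv]
    ring
  simp only [key]
  refine tendsto_tsum_of_dominated_convergence
    (bound := fun L => f L * μ⁻¹ ^ L * M) (hS.mul_right M) ?_ ?_
  · intro L
    have : Tendsto (fun D => g (D - L)) atTop (𝓝 1) :=
      hA.comp (tendsto_atTop_atTop.2 fun b => ⟨b + L, fun a ha => by omega⟩)
    have h1 : Tendsto (fun D => f L * μ⁻¹ ^ L * g (D - L)) atTop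
        (𝓝 (f L * μ⁻¹ ^ L)) := by
      simpa using this.const_mul (f L * μ⁻¹ ^ L)
    refine h1.congr' ?_
    filter_upwards [eventually_ge_atTop L] with D hD
    simp [hF, hD]
  · filter_upwards with D L
    simp only [hF]
    split_ifs with h
    · rw [Real.norm_eq_abs, abs_mul]
      have h1 : 0 ≤ f L * μ⁻¹ ^ L := mul_nonneg (hf0 L) (by positivity)
      rw [abs_of_nonneg h1]
      exact mul_le_mul_of_nonneg_left (hM _) h1
    · simp only [norm_zero]
      exact mul_nonneg (mul_nonneg (hf0 L) (by positivity))
        (le_trans (abs_nonneg _) (hM 0))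
end

section
/- Let O be a countable type of outputs and let m : O → ℕ → ℕ be multiplicities such that Z = Σ_{o} Σ_{L≥0} m_o(L)·2^{−L} is finite and strictly positive. Define A_n = 2^{n+1} − 1 (the number of binary strings of length at most n), N_o(D) = Σ_{L=0}^{D} m_o(L)·A_{D−L}, and P_D(o) = N_o(D)/Σ_{o'} N_{o'}(D). Then for every output o, P_D(o) converges as D → ∞ to (Σ_{L≥0} m_o(L)·2^{−L}) / Z, i.e., the induced distribution over outputs converges to the Solomonoff universal distribution P(o) ∝ Σ_{L≥0} m_o(L)·2^{−L}. -/
open Filter Topology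

/-- Solomonoff's universal distribution as the minimum-temperature binary case:
with the full binary wrapper language, `A_n = 2^{n+1} - 1`, the cutoff
distribution `P_D(o)` converges to `(Σ_L m_o(L) 2^{-L}) / Z`. -/
theorem solomonoff_limit
    {O : Type*} [Countable O]
    (m : O → ℕ → ℕ)
    (hZsum : Summable (fun p : O × ℕ => (m p.1 p.2 : ℝ) * (2 : ℝ)⁻¹ ^ p.2))
    (hZpos : 0 < ∑' (o : O), ∑' (L : ℕ), (m o L : ℝ) * (2 : ℝ)⁻¹ ^ L)
    (A : ℕ → ℝ) (hA : ∀ n, A n = 2 ^ (n + 1) - 1)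
    (o : O) :
    Tendsto
      (fun D : ℕ =>
        (∑ L ∈ Finset.range (D + 1), (m o L : ℝ) * A (D - L)) /
          ∑' (o' : O), ∑ L ∈ Finset.range (D + 1), (m o' L : ℝ) * A (D - L))
      atTop
      (𝓝 ((∑' (L : ℕ), (m o L : ℝ) * (2 : ℝ)⁻¹ ^ L) /
        ∑' (o' : O), ∑' (L : ℕ), (m o' L : ℝ) * (2 : ℝ)⁻¹ ^ L)) := by
  set w : ℕ → ℕ → ℝ := fun D L => if L ≤ D then (2:ℝ)⁻¹ ^ L - (2:ℝ)⁻¹ ^ (D+1) else 0 with hw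
  have hw_le : ∀ D L, w D L ≤ (2:ℝ)⁻¹ ^ L := by
    intro D L
    simp only [hw]
    split_ifs with h
    · have : (0:ℝ) < (2:ℝ)⁻¹ ^ (D+1) := by positivity
      linarith
    · positivity
  have hw_nonneg : ∀ D L, 0 ≤ w D L := by
    intro D L
    simp only [hw]
    split_ifs with h
    · have : (2:ℝ)⁻¹ ^ (D+1) ≤ (2:ℝ)⁻¹ ^ L :=
        pow_le_pow_of_le_one (by norm_num) (by norm_num) (by omega)
      linarith
    · exact le_refl 0
  -- F D p
  set F : ℕ → O × ℕ → ℝ := fun D p => (m p.1 p.2 : ℝ) * w D p.2 with hF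
  have hF_bound : ∀ D p, |F D p| ≤ (m p.1 p.2 : ℝ) * (2:ℝ)⁻¹ ^ p.2 := by
    intro D p
    rw [abs_of_nonneg (by exact mul_nonneg (Nat.cast_nonneg _) (hw_nonneg _ _))]
    exact mul_le_mul_of_nonneg_left (hw_le _ _) (Nat.cast_nonneg _)
  have hFsummable : ∀ D, Summable (F D) := by
    intro D
    exact hZsum.of_norm_bounded (fun p => hF_bound D p)
  -- pointwise limit of w
  have hw_tendsto : ∀ L, Tendsto (fun D => w D L) atTop (𝓝 ((2:ℝ)⁻¹ ^ L)) := by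
    intro L
    have h1 : Tendsto (fun D : ℕ => (2:ℝ)⁻¹ ^ L - (2:ℝ)⁻¹ ^ (D+1)) atTop (𝓝 ((2:ℝ)⁻¹ ^ L - 0)) := by
      apply Tendsto.const_sub
      exact (tendsto_pow_atTop_nhds_zero_of_lt_one (by norm_num) (by norm_num)).comp
        (tendsto_add_atTop_nat 1)
    rw [sub_zero] at h1
    apply h1.congr'
    filter_upwards [eventually_ge_atTop L] with D hD
    simp only [hw, if_pos hD]
  -- key identity: finite sum = 2^(D+1) * tsum of F over L
  have hkey : ∀ (D : ℕ) (o' : O),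
      (∑ L ∈ Finset.range (D + 1), (m o' L : ℝ) * A (D - L))
        = 2 ^ (D+1) * ∑' L, F D (o', L) := by
    intro D o'
    have htsum : ∑' L, F D (o', L) = ∑ L ∈ Finset.range (D+1), F D (o', L) := by
      apply tsum_eq_sum
      intro L hL
      simp only [Finset.mem_range] at hL
      simp only [hF, hw, if_neg (by omega : ¬ L ≤ D), mul_zero]
    rw [htsum, Finset.mul_sum]
    apply Finset.sum_congr rfl
    intro L hL
    simp only [Finset.mem_range] at hL
    have hLD : L ≤ D := by omega
    simp only [hF, hw, if_pos hLD, hA]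
    have h2 : (2:ℝ)^(D+1) * (2:ℝ)⁻¹^L = 2^(D-L+1) := by
      have he : (2:ℝ)^(D+1) = 2^(D-L+1) * 2^L := by rw [← pow_add]; congr 1; omega
      rw [he, mul_assoc, ← mul_pow]; norm_num
    have h3 : (2:ℝ)^(D+1) * (2:ℝ)⁻¹^(D+1) = 1 := by
      rw [← mul_pow]; norm_num
    linear_combination (m o' L : ℝ) * h3 - (m o' L : ℝ) * h2
  -- numerator convergence
  have hnum : Tendsto (fun D => ∑' L, F D (o, L)) atTop
      (𝓝 (∑' L, (m o L : ℝ) * (2:ℝ)⁻¹ ^ L)) := by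
    apply tendsto_tsum_of_dominated_convergence
      (bound := fun L => (m o L : ℝ) * (2:ℝ)⁻¹ ^ L)
    · exact hZsum.prod_factor o
    · intro L
      exact (hw_tendsto L).const_mul _
    · filter_upwards with D L
      exact hF_bound D (o, L)
  -- denominator convergence
  have hden : Tendsto (fun D => ∑' p : O × ℕ, F D p) atTop
      (𝓝 (∑' p : O × ℕ, (m p.1 p.2 : ℝ) * (2:ℝ)⁻¹ ^ p.2)) := by
    apply tendsto_tsum_of_dominated_convergence
      (bound := fun p : O × ℕ => (m p.1 p.2 : ℝ) * (2:ℝ)⁻¹ ^ p.2) hZsum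
    · intro p
      exact (hw_tendsto p.2).const_mul _
    · filter_upwards with D p
      exact hF_bound D p
  have hZeq : (∑' p : O × ℕ, (m p.1 p.2 : ℝ) * (2:ℝ)⁻¹ ^ p.2)
      = ∑' (o' : O), ∑' (L : ℕ), (m o' L : ℝ) * (2:ℝ)⁻¹ ^ L := Summable.tsum_prod hZsum
  rw [hZeq] at hden
  have hZne : (∑' (o' : O), ∑' (L : ℕ), (m o' L : ℝ) * (2:ℝ)⁻¹ ^ L) ≠ 0 := ne_of_gt hZpos
  have hmain : Tendsto (fun D => (∑' L, F D (o, L)) / (∑' p : O × ℕ, F D p)) atTop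
      (𝓝 ((∑' (L : ℕ), (m o L : ℝ) * (2:ℝ)⁻¹ ^ L) /
        ∑' (o' : O), ∑' (L : ℕ), (m o' L : ℝ) * (2:ℝ)⁻¹ ^ L)) :=
    hnum.div hden hZne
  apply hmain.congr
  intro D
  have hdeq : (∑' (o' : O), ∑ L ∈ Finset.range (D + 1), (m o' L : ℝ) * A (D - L))
      = 2 ^ (D+1) * ∑' p : O × ℕ, F D p := by
    calc (∑' (o' : O), ∑ L ∈ Finset.range (D + 1), (m o' L : ℝ) * A (D - L))
        = ∑' (o' : O), 2 ^ (D+1) * ∑' L, F D (o', L) := by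
          exact tsum_congr (fun o' => hkey D o')
      _ = 2 ^ (D+1) * ∑' (o' : O), ∑' L, F D (o', L) := tsum_mul_left
      _ = 2 ^ (D+1) * ∑' p : O × ℕ, F D p := by rw [← Summable.tsum_prod (hFsummable D)]
  rw [hkey D o, hdeq, mul_div_mul_left _ _ (by positivity : (2:ℝ) ^ (D+1) ≠ 0)]
end

section
/- Let μ > 1 and let (A_n) be nonnegative reals with A_n·(μ−1)/μ^{n+1} → 1 as n → ∞. Let f, g : ℕ → ℝ be nonnegative with S_f = Σ_{L≥0} f(L)·μ^{−L} and S_g = Σ_{L≥0} g(L)·μ^{−L} both finite and S_g > 0. Then the ratio (Σ_{L=0}^{D} f(L)·A_{D−L}) / (Σ_{L=0}^{D} g(L)·A_{D−L}) converges to S_f/S_g as D → ∞. -/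
open Filter Topology

private lemma key_conv (μ : ℝ) (hμ : 1 < μ) (A : ℕ → ℝ)
    (hA : Tendsto (fun n => A n * (μ - 1) / μ ^ (n + 1)) atTop (𝓝 1))
    (f : ℕ → ℝ) (hf0 : ∀ L, 0 ≤ f L)
    (hSf : Summable (fun L => f L * μ⁻¹ ^ L)) :
    Tendsto (fun D : ℕ =>
      (∑ L ∈ Finset.range (D + 1), f L * A (D - L)) * ((μ - 1) / μ ^ (D + 1)))
      atTop (𝓝 (∑' (L : ℕ), f L * μ⁻¹ ^ L)) := by
  have hμ0 : (0:ℝ) < μ := lt_trans one_pos hμ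
  set B : ℕ → ℝ := fun n => A n * (μ - 1) / μ ^ (n + 1) with hB
  -- bound on B
  obtain ⟨C, hC⟩ : ∃ C, ∀ n, |B n| ≤ C := by
    have hb : BddAbove (Set.range fun n => |B n|) := (hA.abs).bddAbove_range
    obtain ⟨C, hC⟩ := hb
    exact ⟨C, fun n => hC ⟨n, rfl⟩⟩
  set F : ℕ → ℕ → ℝ := fun D L => if L ≤ D then f L * μ⁻¹ ^ L * B (D - L) else 0 with hF
  have heq : ∀ D : ℕ,
      (∑ L ∈ Finset.range (D + 1), f L * A (D - L)) * ((μ - 1) / μ ^ (D + 1))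
        = ∑' L, F D L := by
    intro D
    rw [tsum_eq_sum (s := Finset.range (D + 1)) (by
      intro b hb
      simp only [Finset.mem_range] at hb
      simp only [F]
      rw [if_neg (by omega)])]
    rw [Finset.sum_mul]
    refine Finset.sum_congr rfl fun L hL => ?_
    have hLD : L ≤ D := Nat.lt_succ_iff.mp (Finset.mem_range.mp hL)
    simp only [F, if_pos hLD, B]
    have hpow : μ ^ (D + 1) = μ ^ (D - L + 1) * μ ^ L := by
      rw [← pow_add]; congr 1; omega
    rw [hpow]
    field_simp
    have hL1 : μ ^ L * μ⁻¹ ^ L = 1 := by rw [← mul_pow, mul_inv_cancel₀ hμ0.ne', one_pow]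
    linear_combination (f L * A (D - L) - f L * A (D - L) * μ) * hL1
  have hptw : ∀ L : ℕ, Tendsto (fun D => F D L) atTop (𝓝 (f L * μ⁻¹ ^ L)) := by
    intro L
    have h1 : Tendsto (fun D => f L * μ⁻¹ ^ L * B (D - L)) atTop (𝓝 (f L * μ⁻¹ ^ L * 1)) :=
      Tendsto.const_mul _ (hA.comp (tendsto_sub_atTop_nat L))
    rw [mul_one] at h1
    refine h1.congr' ?_
    filter_upwards [eventually_ge_atTop L] with D hD
    simp [F, hD]
  have hbound : ∀ᶠ D in atTop, ∀ L, ‖F D L‖ ≤ f L * μ⁻¹ ^ L * C := by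
    refine Eventually.of_forall fun D L => ?_
    have hnn : 0 ≤ f L * μ⁻¹ ^ L := mul_nonneg (hf0 L) (by positivity)
    by_cases h : L ≤ D
    · simp only [F, if_pos h, norm_mul, Real.norm_eq_abs]
      rw [abs_of_nonneg (hf0 L), abs_of_nonneg (by positivity : (0:ℝ) ≤ μ⁻¹ ^ L)]
      exact mul_le_mul_of_nonneg_left (hC _) hnn
    · simp only [F, if_neg h, norm_zero]
      exact mul_nonneg hnn ((abs_nonneg (B 0)).trans (hC 0))
  have := tendsto_tsum_of_dominated_convergence (hSf.mul_right C) hptw hbound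
  exact Tendsto.congr (fun D => (heq D).symm) this

/-- Cancellation step: under the wrapper asymptotics `A_n (μ-1)/μ^{n+1} → 1`,
the ratio of convolutions `Σ f(L) A_{D-L} / Σ g(L) A_{D-L}` converges to
`S_f / S_g` where `S_f = Σ_L f(L) μ^{-L}` and `S_g = Σ_L g(L) μ^{-L}`. -/
theorem convolution_ratio_limit (μ : ℝ) (hμ : 1 < μ)
    (A : ℕ → ℝ) (hA0 : ∀ n, 0 ≤ A n)
    (hA : Tendsto (fun n => A n * (μ - 1) / μ ^ (n + 1)) atTop (𝓝 1))
    (f g : ℕ → ℝ) (hf0 : ∀ L, 0 ≤ f L) (hg0 : ∀ L, 0 ≤ g L)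
    (hSf : Summable (fun L => f L * μ⁻¹ ^ L))
    (hSg : Summable (fun L => g L * μ⁻¹ ^ L))
    (hSgpos : 0 < ∑' (L : ℕ), g L * μ⁻¹ ^ L) :
    Tendsto
      (fun D : ℕ =>
        (∑ L ∈ Finset.range (D + 1), f L * A (D - L)) /
          ∑ L ∈ Finset.range (D + 1), g L * A (D - L))
      atTop
      (𝓝 ((∑' (L : ℕ), f L * μ⁻¹ ^ L) / ∑' (L : ℕ), g L * μ⁻¹ ^ L)) := by
  have hμ0 : (0:ℝ) < μ := lt_trans one_pos hμ
  have hnum := key_conv μ hμ A hA f hf0 hSf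
  have hden := key_conv μ hμ A hA g hg0 hSg
  have hratio := hnum.div hden (ne_of_gt hSgpos)
  refine hratio.congr fun D => ?_
  have hc : (μ - 1) / μ ^ (D + 1) ≠ 0 :=
    (div_pos (sub_pos.mpr hμ) (pow_pos hμ0 _)).ne'
  exact mul_div_mul_right _ _ hc
end
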